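/- A finite (or, assuming the union of value sets is well ordered, arbitrary) direct product of spherically complete ultrametric spaces, with the minimum ultrametric, is spherically complete. -/

import Mathlib

section Ultrametric

variable {Y Y' : Type*} {Γ Γ' : Type*} [LinearOrder Γ] [OrderTop Γ]
  [LinearOrder Γ'] [OrderTop Γ']

/-- The axioms of an ultrametric space with distance values in `Γ` (with top element `∞`). -/
def IsUltrametric (u : Y → Y → Γ) : Prop :=
  (∀ y z, u y z = ⊤ ↔ y = z) ∧
  (∀ x y z, min (u y x) (u x z) ≤ u y z) ∧
  (∀ y z, u y z = u z y)

/-- The closed ball of radius `α` around `y`. -/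
def closedBall (u : Y → Y → Γ) (α : Γ) (y : Y) : Set Y := {z | α ≤ u y z}

/-- `B(x,y)`, the smallest closed ball containing `x` and `y`. -/
def smallBall (u : Y → Y → Γ) (x y : Y) : Set Y := closedBall u (u x y) x

/-- A ball: a union of a nonempty collection of closed balls having a common element. -/
def IsBall (u : Y → Y → Γ) (S : Set Y) : Prop :=
  ∃ C : Set (Γ × Y), C.Nonempty ∧ (∃ y₀, ∀ p ∈ C, y₀ ∈ closedBall u p.1 p.2) ∧
    S = ⋃ p ∈ C, closedBall u p.1 p.2

/-- Spherical completeness: every nest of balls has nonempty intersection. -/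
def SphericallyComplete (u : Y → Y → Γ) : Prop :=
  ∀ N : Set (Set Y), N.Nonempty → (∀ B ∈ N, IsBall u B) →
    IsChain (· ⊆ ·) N → (⋂₀ N).Nonempty

/-- `z'` is an attractor for `f`. -/
def IsAttractor (u : Y → Y → Γ) (u' : Y' → Y' → Γ') (f : Y → Y') (z' : Y') : Prop :=
  ∀ y : Y, f y ≠ z' → ∃ z : Y,
    u' (f y) z' < u' (f z) z' ∧ f '' smallBall u y z ⊆ smallBall u' (f y) z'

/-- A map is immediate if every element of the target is an attractor for it. -/
def Immediate (u : Y → Y → Γ) (u' : Y' → Y' → Γ') (f : Y → Y') : Prop :=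
  ∀ z' : Y', IsAttractor u u' f z'

end Ultrametric

/-- a finite direct product of spherically complete ultrametric spaces,
with the minimum ultrametric, is spherically complete. -/
theorem sphericallyComplete_product {I : Type*} [Fintype I] [Nonempty I] {Γ : Type*}
    [LinearOrder Γ] [OrderTop Γ]
    (Y : I → Type*) (u : ∀ i, Y i → Y i → Γ) (hu : ∀ i, IsUltrametric (u i))
    (hsc : ∀ i, SphericallyComplete (u i)) :
    SphericallyComplete (fun a b : ∀ i, Y i => Finset.univ.inf fun i => u i (a i) (b i)) := by
  classical
  set U : (∀ i, Y i) → (∀ i, Y i) → Γ := fun a b => Finset.univ.inf fun i => u i (a i) (b i)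
    with hUdef
  have hUle : ∀ (a b : ∀ i, Y i) (i : I), U a b ≤ u i (a i) (b i) := fun a b i =>
    Finset.inf_le (Finset.mem_univ i)
  have hUiff : ∀ {α : Γ} {a b : ∀ i, Y i}, α ≤ U a b ↔ ∀ i, α ≤ u i (a i) (b i) := by
    intro α a b
    simp [hUdef, Finset.le_inf_iff]
  have hrefl : ∀ (i : I) (w : Y i), u i w w = ⊤ := fun i w => ((hu i).1 w w).mpr rfl
  have hUsymm : ∀ a b : ∀ i, Y i, U a b = U b a := by
    intro a b
    exact Finset.inf_congr rfl (fun i _ => (hu i).2.2 _ _)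
  have hUtri : ∀ a b c : ∀ i, Y i, min (U b a) (U a c) ≤ U b c := by
    intro a b c
    apply Finset.le_inf
    intro i _
    calc min (U b a) (U a c) ≤ min (u i (b i) (a i)) (u i (a i) (c i)) :=
          min_le_min (hUle _ _ _) (hUle _ _ _)
      _ ≤ u i (b i) (c i) := (hu i).2.1 _ _ _
  have hrec : ∀ {α : Γ} {a b z : ∀ i, Y i}, α ≤ U a b → (α ≤ U a z ↔ α ≤ U b z) := by
    intro α a b z hab
    constructor
    · intro h
      exact le_trans (le_min (hUsymm a b ▸ hab) h) (hUtri a b z)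
    · intro h
      exact le_trans (le_min hab h) (hUtri b a z)
  intro N hN hball hchain
  -- normalized representation of each ball in the nest
  have key : ∀ B ∈ N, ∃ (y₀ : ∀ i, Y i) (A : Set Γ), A.Nonempty ∧
      B = {z | ∃ α ∈ A, α ≤ U y₀ z} := by
    intro B hB
    obtain ⟨C, hCne, ⟨y₀, hy₀⟩, hBeq⟩ := hball B hB
    refine ⟨y₀, Prod.fst '' C, hCne.image _, ?_⟩
    rw [hBeq]
    ext z
    constructor
    · intro hz
      obtain ⟨p, hp, hzp⟩ := Set.mem_iUnion₂.mp hz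
      exact ⟨p.1, ⟨p, hp, rfl⟩, (hrec (hy₀ p hp)).mp hzp⟩
    · rintro ⟨α, ⟨p, hp, rfl⟩, hz⟩
      exact Set.mem_iUnion₂.mpr ⟨p, hp, (hrec (hy₀ p hp)).mpr hz⟩
  -- projections of each ball
  have proj : ∀ (y₀ : ∀ i, Y i) (A : Set Γ) (i : I),
      (fun z : ∀ j, Y j => z i) '' {z | ∃ α ∈ A, α ≤ U y₀ z}
        = {w | ∃ α ∈ A, α ≤ u i (y₀ i) w} := by
    intro y₀ A i
    ext w
    constructor
    · rintro ⟨z, ⟨α, hα, hz⟩, rfl⟩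
      exact ⟨α, hα, le_trans hz (hUle _ _ _)⟩
    · rintro ⟨α, hα, hw⟩
      refine ⟨Function.update y₀ i w, ⟨α, hα, hUiff.mpr ?_⟩, Function.update_self i w y₀⟩
      intro j
      rcases eq_or_ne j i with rfl | hji
      · rw [Function.update_self]; exact hw
      · rw [Function.update_of_ne hji, hrefl]; exact le_top
  -- the family of projections, per coordinate
  set NI : ∀ i : I, Set (Set (Y i)) := fun i => (fun B => (fun z : ∀ j, Y j => z i) '' B) '' N
    with hNI
  have hz : ∀ i, (⋂₀ NI i).Nonempty := by
    intro i
    apply hsc i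
    · exact hN.image _
    · rintro S ⟨B, hB, rfl⟩
      obtain ⟨y₀, A, hAne, rfl⟩ := key B hB
      show IsBall (u i) ((fun z : ∀ j, Y j => z i) '' {z | ∃ α ∈ A, α ≤ U y₀ z})
      rw [proj y₀ A i]
      refine ⟨(fun α => (α, y₀ i)) '' A, hAne.image _, ⟨y₀ i, ?_⟩, ?_⟩
      · rintro p ⟨α, hα, rfl⟩
        simp only [closedBall, Set.mem_setOf_eq, hrefl]
        exact le_top
      · ext w
        simp only [Set.mem_iUnion, Set.mem_setOf_eq, closedBall, Set.mem_image]
        constructor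
        · rintro ⟨α, hα, hw⟩
          exact ⟨(α, y₀ i), ⟨α, hα, rfl⟩, hw⟩
        · rintro ⟨p, ⟨α, hα, rfl⟩, hw⟩
          exact ⟨α, hα, hw⟩
    · rintro S₁ ⟨B₁, hB₁, rfl⟩ S₂ ⟨B₂, hB₂, rfl⟩ hne
      have hBne : B₁ ≠ B₂ := by rintro rfl; exact hne rfl
      rcases hchain hB₁ hB₂ hBne with h | h
      · exact Or.inl (Set.image_mono h)
      · exact Or.inr (Set.image_mono h)
  refine ⟨fun i => (hz i).some, ?_⟩
  intro B hB
  obtain ⟨y₀, A, hAne, hBeq⟩ := key B hB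
  have hmem : ∀ i, (hz i).some ∈ (fun z : ∀ j, Y j => z i) '' B := by
    intro i
    exact (hz i).some_mem _ ⟨B, hB, rfl⟩
  have hmem' : ∀ i, ∃ α ∈ A, α ≤ u i (y₀ i) ((hz i).some) := by
    intro i
    have := hmem i
    rw [hBeq, proj y₀ A i] at this
    exact this
  choose αf hαA hαle using hmem'
  obtain ⟨i₀, _, hmin⟩ := Finset.exists_min_image Finset.univ αf ⟨Classical.arbitrary I,
    Finset.mem_univ _⟩
  rw [hBeq]
  refine ⟨αf i₀, hαA i₀, hUiff.mpr fun j => le_trans (hmin j (Finset.mem_univ j)) (hαle j)⟩
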